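/- Let P = [a] × [2b] with partial order (x,y) ⪯ (z,t) iff (x,y)=(z,t), or (x<z and y<t), or (y ≤ b and t ≥ b+1 and y < t-b). Then the maximal antichains of P are exactly the paths starting in (1, b+h) and ending in (a, h) for some 1 ≤ h ≤ b, where a path is a set of points obtainable by successive steps (1,0) or (0,-1). -/

import Mathlib

/-- A step moves one unit down `(1,0)` or one unit left `(0,-1)`. -/
def Step (p q : ℤ × ℤ) : Prop := q = p + (1, 0) ∨ q = p + (0, -1)

/-- `l` is a path starting at `p` and ending at `q`, each consecutive
difference being `(1,0)` or `(0,-1)`. -/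
def IsPathFromTo (l : List (ℤ × ℤ)) (p q : ℤ × ℤ) : Prop :=
  l.Chain' Step ∧ l.head? = some p ∧ l.getLast? = some q

/-- Membership in the poset `P = [a] × [2b]`, viewed inside `ℤ × ℤ`. -/
def memP (a b : ℕ) (p : ℤ × ℤ) : Prop :=
  1 ≤ p.1 ∧ p.1 ≤ (a : ℤ) ∧ 1 ≤ p.2 ∧ p.2 ≤ 2 * (b : ℤ)

/-- The partial order on `P = [a] × [2b]`:
`(x,y) ⪯ (z,t)` iff `(x,y) = (z,t)`, or `x < z` and `y < t`,
or `y ≤ b`, `t ≥ b+1` and `y < t - b`. -/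
def ple (b : ℕ) (p q : ℤ × ℤ) : Prop :=
  p = q ∨ (p.1 < q.1 ∧ p.2 < q.2) ∨
    (p.2 ≤ (b : ℤ) ∧ (b : ℤ) + 1 ≤ q.2 ∧ p.2 < q.2 - (b : ℤ))

lemma step_iff (p q : ℤ × ℤ) :
    Step p q ↔ (q.1 = p.1 + 1 ∧ q.2 = p.2) ∨ (q.1 = p.1 ∧ q.2 = p.2 - 1) := by
  constructor
  · rintro (rfl | rfl)
    · exact Or.inl ⟨rfl, add_zero _⟩
    · exact Or.inr ⟨add_zero _, sub_eq_add_neg p.2 1 ▸ rfl⟩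
  · rintro (⟨h1, h2⟩ | ⟨h1, h2⟩)
    · left
      rw [Prod.ext_iff]
      exact ⟨h1, by rw [h2]; exact (add_zero _).symm⟩
    · right
      rw [Prod.ext_iff]
      refine ⟨by rw [h1]; exact (add_zero _).symm, by rw [h2]; rw [sub_eq_add_neg]; rfl⟩

lemma path_bounds : ∀ (l : List (ℤ × ℤ)) (p0 p1 : ℤ × ℤ), IsPathFromTo l p0 p1 →
    ∀ p ∈ l, p0.1 ≤ p.1 ∧ p.2 ≤ p0.2 ∧ p.1 ≤ p1.1 ∧ p1.2 ≤ p.2 := by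
  intro l
  induction l with
  | nil => intro p0 p1 h; exact absurd h.2.1 (by simp)
  | cons q tail ih =>
    intro p0 p1 h
    obtain ⟨hc, hh, hl⟩ := h
    have hq : q = p0 := by simpa using hh
    subst hq
    cases tail with
    | nil =>
      have hq1 : q = p1 := by simpa using hl
      subst hq1
      intro p hp
      have hpq : p = q := by simpa using hp
      subst hpq
      exact ⟨le_refl _, le_refl _, le_refl _, le_refl _⟩
    | cons q' t =>
      simp only [List.Chain'] at hc; rw [List.isChain_cons_cons] at hc
      rw [List.getLast?_cons_cons] at hl
      have ih' := ih q' p1 ⟨hc.2, rfl, hl⟩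
      have hs := (step_iff _ _).mp hc.1
      intro p hp
      rcases List.mem_cons.mp hp with rfl | hp
      · have h1 := ih' q' (List.mem_cons_self)
        refine ⟨le_refl _, le_refl _, ?_, ?_⟩ <;> omega
      · have h1 := ih' p hp
        refine ⟨?_, ?_, ?_, ?_⟩ <;> omega

lemma path_pairwise (l : List (ℤ × ℤ)) (hc : l.Chain' Step) :
    ∀ p ∈ l, ∀ q ∈ l, p ≠ q →
      (p.1 ≤ q.1 ∧ q.2 ≤ p.2 ∧ p.1 - p.2 < q.1 - q.2) ∨
      (q.1 ≤ p.1 ∧ p.2 ≤ q.2 ∧ q.1 - q.2 < p.1 - p.2) := by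
  set R : ℤ × ℤ → ℤ × ℤ → Prop :=
    fun p q => p.1 ≤ q.1 ∧ q.2 ≤ p.2 ∧ p.1 - p.2 < q.1 - q.2 with hR
  haveI : IsTrans (ℤ × ℤ) R := ⟨by intro x y z h1 h2; simp only [hR] at *; omega⟩
  have h1 : l.Chain' R := hc.imp (by
    intro x y hxy
    have := (step_iff _ _).mp hxy
    simp only [hR]
    omega)
  have h2 := List.isChain_iff_pairwise.mp h1
  have h3 : l.Pairwise (fun p q => R p q ∨ R q p) := h2.imp Or.inl
  intro p hp q hq hpq
  exact (haveI : Std.Symm (fun p q => R p q ∨ R q p) := ⟨fun x y h => h.symm⟩; h3.forall hp hq hpq)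

lemma diag_surj : ∀ (l : List (ℤ × ℤ)) (p0 p1 : ℤ × ℤ), IsPathFromTo l p0 p1 →
    ∀ t : ℤ, p0.1 - p0.2 ≤ t → t ≤ p1.1 - p1.2 → ∃ s ∈ l, s.1 - s.2 = t := by
  intro l
  induction l with
  | nil => intro p0 p1 h; exact absurd h.2.1 (by simp)
  | cons q tail ih =>
    intro p0 p1 h t ht1 ht2
    obtain ⟨hc, hh, hl⟩ := h
    have hq : q = p0 := by simpa using hh
    subst hq
    rcases eq_or_lt_of_le ht1 with heq | hlt
    · exact ⟨q, List.mem_cons_self, heq⟩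
    · cases tail with
      | nil =>
        have hq1 : q = p1 := by simpa using hl
        subst hq1
        omega
      | cons q' t' =>
        simp only [List.Chain'] at hc; rw [List.isChain_cons_cons] at hc
        rw [List.getLast?_cons_cons] at hl
        have hs := (step_iff _ _).mp hc.1
        obtain ⟨s, hs1, hs2⟩ := ih q' p1 ⟨hc.2, rfl, hl⟩ t (by omega) ht2
        exact ⟨s, List.mem_cons_of_mem _ hs1, hs2⟩

open Classical in
/-- Greedy next point of a staircase inside `S`. -/
noncomputable def nxt (S : Set (ℤ × ℤ)) (p : ℤ × ℤ) : ℤ × ℤ :=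
  if (p.1 + 1, p.2) ∈ S then (p.1 + 1, p.2) else (p.1, p.2 - 1)

lemma nxt_step (S : Set (ℤ × ℤ)) (p : ℤ × ℤ) : Step p (nxt S p) := by
  unfold nxt
  split
  · exact Or.inl (Prod.ext_iff.mpr ⟨rfl, (add_zero _).symm⟩)
  · exact Or.inr (Prod.ext_iff.mpr ⟨(add_zero _).symm, sub_eq_add_neg p.2 1⟩)

lemma nxt_diff (S : Set (ℤ × ℤ)) (p : ℤ × ℤ) :
    (nxt S p).1 - (nxt S p).2 = p.1 - p.2 + 1 := by
  unfold nxt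
  split
  · show p.1 + 1 - p.2 = p.1 - p.2 + 1; ring
  · show p.1 - (p.2 - 1) = p.1 - p.2 + 1; ring

lemma nxt_mem (S : Set (ℤ × ℤ)) (p : ℤ × ℤ)
    (h : (p.1 + 1, p.2) ∈ S ∨ (p.1, p.2 - 1) ∈ S) : nxt S p ∈ S := by
  unfold nxt
  by_cases h1 : (p.1 + 1, p.2) ∈ S
  · rw [if_pos h1]; exact h1
  · rw [if_neg h1]; exact h.resolve_left h1

lemma buildPath (S : Set (ℤ × ℤ)) : ∀ (n : ℕ) (p : ℤ × ℤ),
    ∃ l : List (ℤ × ℤ), l.Chain' Step ∧ l.head? = some p ∧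
      l.getLast? = some ((nxt S)^[n] p) ∧
      ∀ q, q ∈ l ↔ ∃ i, i ≤ n ∧ (nxt S)^[i] p = q := by
  intro n
  induction n with
  | zero =>
    intro p
    refine ⟨[p], List.isChain_singleton p, rfl, rfl, ?_⟩
    intro q
    simp only [List.mem_singleton, Function.iterate_zero, id]
    constructor
    · rintro rfl; exact ⟨0, le_refl 0, rfl⟩
    · rintro ⟨i, hi, rfl⟩
      have : i = 0 := Nat.le_zero.mp hi
      subst this
      rfl
  | succ n ih =>
    intro p
    obtain ⟨l, h1, h2, h3, h4⟩ := ih (nxt S p)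
    obtain ⟨lh, lt, rfl⟩ : ∃ x xs, l = x :: xs := by
      cases l
      · simp at h2
      · exact ⟨_, _, rfl⟩
    have hlh : lh = nxt S p := by simpa using h2
    refine ⟨p :: lh :: lt, ?_, rfl, ?_, ?_⟩
    · simp only [List.Chain']; rw [List.isChain_cons_cons]
      exact ⟨by rw [hlh]; exact nxt_step S p, h1⟩
    · rw [List.getLast?_cons_cons, Function.iterate_succ_apply]
      exact h3
    · intro q
      rw [List.mem_cons, h4]
      constructor
      · rintro (rfl | ⟨i, hi, rfl⟩)
        · exact ⟨0, Nat.zero_le _, rfl⟩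
        · exact ⟨i + 1, by omega, by rw [Function.iterate_succ_apply]⟩
      · rintro ⟨i, hi, rfl⟩
        cases i with
        | zero => exact Or.inl rfl
        | succ i => exact Or.inr ⟨i, by omega, (Function.iterate_succ_apply _ i p).symm⟩

theorem stmt_6 (a b : ℕ) (ha : 2 ≤ a) (hab : a ≤ b) (S : Set (ℤ × ℤ))
    (hS : ∀ p ∈ S, memP a b p) :
    (IsAntichain (ple b) S ∧
        ∀ S' : Set (ℤ × ℤ), (∀ p ∈ S', memP a b p) → IsAntichain (ple b) S' →
          S ⊆ S' → S = S') ↔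
    ∃ h : ℕ, 1 ≤ h ∧ h ≤ b ∧ ∃ l : List (ℤ × ℤ),
      IsPathFromTo l (1, (b : ℤ) + (h : ℤ)) ((a : ℤ), (h : ℤ)) ∧
      S = {x | x ∈ l} := by
  constructor
  · rintro ⟨hac, hmax⟩
    -- Maximal antichain implies path.
    have sat : ∀ r : ℤ × ℤ, memP a b r → r ∉ S → ∃ s ∈ S, ple b s r ∨ ple b r s := by
      intro r hrP hrS
      by_contra hcon
      push_neg at hcon
      have hins : ∀ p ∈ insert r S, memP a b p := by
        intro p hp
        rcases Set.mem_insert_iff.mp hp with rfl | hp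
        exacts [hrP, hS p hp]
      have hanti : IsAntichain (ple b) (insert r S) := by
        intro x hx y hy hxy
        rcases Set.mem_insert_iff.mp hx with hx' | hx'
        · rcases Set.mem_insert_iff.mp hy with hy' | hy'
          · exact absurd (hx'.trans hy'.symm) hxy
          · intro hp
            rw [hx'] at hp
            exact (hcon y hy').2 hp
        · rcases Set.mem_insert_iff.mp hy with hy' | hy'
          · intro hp
            rw [hy'] at hp
            exact (hcon x hx').1 hp
          · exact hac hx' hy' hxy
      have heq := hmax _ hins hanti (Set.subset_insert r S)
      rw [heq] at hrS
      exact hrS (Set.mem_insert r S)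
    have satE : ∀ x y : ℤ, 1 ≤ x → x ≤ (a : ℤ) → 1 ≤ y → y ≤ 2 * (b : ℤ) → (x, y) ∉ S →
        ∃ s ∈ S, (s.1 < x ∧ s.2 < y) ∨ (s.2 ≤ (b : ℤ) ∧ (b : ℤ) + 1 ≤ y ∧ s.2 < y - b) ∨
          (x < s.1 ∧ y < s.2) ∨ (y ≤ (b : ℤ) ∧ (b : ℤ) + 1 ≤ s.2 ∧ y < s.2 - b) := by
      intro x y h1 h2 h3 h4 hns
      obtain ⟨s, hs, hcomp⟩ := sat (x, y) ⟨h1, h2, h3, h4⟩ hns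
      have hne : s ≠ (x, y) := fun e => hns (e ▸ hs)
      rcases hcomp with (e | ⟨u, v⟩ | ⟨u, v, w⟩) | (e | ⟨u, v⟩ | ⟨u, v, w⟩)
      · exact absurd e hne
      · exact ⟨s, hs, Or.inl ⟨u, v⟩⟩
      · exact ⟨s, hs, Or.inr (Or.inl ⟨u, v, w⟩)⟩
      · exact absurd e.symm hne
      · exact ⟨s, hs, Or.inr (Or.inr (Or.inl ⟨u, v⟩))⟩
      · exact ⟨s, hs, Or.inr (Or.inr (Or.inr ⟨u, v, w⟩))⟩
    -- S is nonempty
    have hne : S.Nonempty := by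
      rcases Set.eq_empty_or_nonempty S with rfl | h
      · obtain ⟨s, hs, -⟩ := sat (1, 1) ⟨le_refl _, by omega, le_refl _, by omega⟩ (by simp)
        exact absurd hs (by simp)
      · exact h
    obtain ⟨p₀, hp₀⟩ := hne
    -- minimum of the second coordinates
    obtain ⟨m, ⟨xm, hxm⟩, hminP⟩ :=
      Int.exists_least_of_bdd (P := fun z => ∃ x : ℤ, (x, z) ∈ S)
        ⟨1, fun z ⟨x, hx⟩ => (hS _ hx).2.2.1⟩
        ⟨p₀.2, p₀.1, by simpa using hp₀⟩
    have hminS : ∀ s ∈ S, m ≤ s.2 := fun s hs => hminP s.2 ⟨s.1, by simpa using hs⟩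
    have hm1 : 1 ≤ m := (hS _ hxm).2.2.1
    have hm2b : m ≤ 2 * (b : ℤ) := (hS _ hxm).2.2.2
    -- the second coordinates span at most b
    have span : ∀ s ∈ S, s.2 ≤ m + b := by
      intro s hs
      by_contra hcon
      push_neg at hcon
      obtain ⟨-, -, -, hs2⟩ := hS s hs
      have hne2 : (xm, m) ≠ s := by
        intro e
        have h2 : m = s.2 := congrArg Prod.snd e
        omega
      have hple : ple b (xm, m) s := Or.inr (Or.inr
        (show m ≤ (b : ℤ) ∧ (b : ℤ) + 1 ≤ s.2 ∧ m < s.2 - b from ⟨by omega, by omega, by omega⟩))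
      exact hac hxm hs hne2 hple
    -- monotonicity from the antichain condition
    have monoA : ∀ p ∈ S, ∀ q ∈ S, p.2 < q.2 → q.1 ≤ p.1 := by
      intro p hp q hq hlt
      by_contra hcon
      push_neg at hcon
      have hne2 : p ≠ q := by
        intro e
        rw [e] at hlt
        exact lt_irrefl _ hlt
      exact hac hp hq hne2 (Or.inr (Or.inl ⟨hcon, hlt⟩))
    -- uniqueness along diagonals
    have uniq : ∀ p ∈ S, ∀ q ∈ S, p.1 - p.2 = q.1 - q.2 → p = q := by
      intro p hp q hq he
      rcases lt_trichotomy p.2 q.2 with h' | h' | h'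
      · have := monoA p hp q hq h'
        exact absurd he (by omega)
      · exact Prod.ext_iff.mpr ⟨by omega, h'⟩
      · have := monoA q hq p hp h'
        exact absurd he (by omega)
    -- m ≤ b
    have hmb : m ≤ (b : ℤ) := by
      by_contra hcon
      push_neg at hcon
      obtain ⟨s, hs, hd⟩ := satE (a : ℤ) (m - 1) (by omega) le_rfl (by omega) (by omega)
        (fun hmem => absurd (hminS _ hmem) (show ¬ m ≤ m - 1 by omega))
      obtain ⟨hs1, hs2, hs3, hs4⟩ := hS s hs
      have f2 := hminS s hs
      have f3 := span s hs
      rcases hd with h | h | h | h <;> omega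
    -- the top point (1, m+b) is in S
    have htop : ((1 : ℤ), m + (b : ℤ)) ∈ S := by
      by_contra hcon
      obtain ⟨s, hs, hd⟩ := satE 1 (m + b) le_rfl (by omega) (by omega) (by omega) hcon
      obtain ⟨hs1, hs2, hs3, hs4⟩ := hS s hs
      have f2 := hminS s hs
      have f3 := span s hs
      rcases hd with h | h | h | h <;> omega
    -- the bottom point (a, m) is in S
    have hbot : (((a : ℕ) : ℤ), m) ∈ S := by
      by_contra hcon
      obtain ⟨s, hs, hd⟩ := satE (a : ℤ) m (by omega) le_rfl (by omega) (by omega) hcon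
      obtain ⟨hs1, hs2, hs3, hs4⟩ := hS s hs
      have f2 := hminS s hs
      have f3 := span s hs
      rcases hd with h | h | h | h <;> omega
    -- the step lemma
    have hstep : ∀ s ∈ S, s.1 - s.2 < (a : ℤ) - m → (s.1 + 1, s.2) ∈ S ∨ (s.1, s.2 - 1) ∈ S := by
      intro s hs hφ
      by_contra hcon
      push_neg at hcon
      obtain ⟨hn1, hn2⟩ := hcon
      obtain ⟨hx1, hx2, hy1, hy2⟩ := hS s hs
      have hm' := hminS s hs
      have hsp := span s hs
      rcases lt_or_ge s.1 (a : ℤ) with hxa | hxa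
      · obtain ⟨s', hs', hd⟩ := satE (s.1 + 1) s.2 (by omega) (by omega) hy1 hy2 hn1
        obtain ⟨g1, g2, g3, g4⟩ := hS s' hs'
        have f2 := hminS s' hs'
        have f3 := span s' hs'
        have key : s'.1 = s.1 ∧ s'.2 < s.2 := by
          rcases hd with h | h | h | h
          · have := monoA s' hs' s hs h.2
            exact ⟨by omega, h.2⟩
          · omega
          · have := monoA s hs s' hs' h.2
            omega
          · omega
        have hy : m < s.2 := by omega
        obtain ⟨s'', hs'', hd2⟩ := satE s.1 (s.2 - 1) hx1 hx2 (by omega) (by omega) hn2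
        obtain ⟨k1, k2, k3, k4⟩ := hS s'' hs''
        have e2 := hminS s'' hs''
        have e3 := span s'' hs''
        rcases hd2 with h | h | h | h
        · have := monoA s'' hs'' s hs (by omega)
          omega
        · omega
        · have := monoA s' hs' s'' hs'' (by omega)
          omega
        · omega
      · have hy : m < s.2 := by omega
        obtain ⟨s'', hs'', hd2⟩ := satE s.1 (s.2 - 1) hx1 hx2 (by omega) (by omega) hn2
        obtain ⟨k1, k2, k3, k4⟩ := hS s'' hs''
        have e2 := hminS s'' hs''
        have e3 := span s'' hs''
        rcases hd2 with h | h | h | h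
        · have := monoA s'' hs'' s hs (by omega)
          omega
        · omega
        · omega
        · omega
    -- build the path
    obtain ⟨l, hcl, hhl, hll, hmeml⟩ := buildPath S (a + b - 1) ((1 : ℤ), m + (b : ℤ))
    have hinv : ∀ i : ℕ, i ≤ a + b - 1 → (nxt S)^[i] ((1 : ℤ), m + (b : ℤ)) ∈ S ∧
        ((nxt S)^[i] ((1 : ℤ), m + (b : ℤ))).1 - ((nxt S)^[i] ((1 : ℤ), m + (b : ℤ))).2
          = 1 - (m + b) + (i : ℤ) := by
      intro i
      induction i with
      | zero =>
        intro _
        refine ⟨htop, ?_⟩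
        show (1 : ℤ) - (m + (b : ℤ)) = 1 - (m + b) + ((0 : ℕ) : ℤ)
        omega
      | succ i ih =>
        intro hle
        obtain ⟨h1, h2⟩ := ih (by omega)
        rw [Function.iterate_succ_apply']
        have hφ : ((nxt S)^[i] ((1 : ℤ), m + (b : ℤ))).1
            - ((nxt S)^[i] ((1 : ℤ), m + (b : ℤ))).2 < (a : ℤ) - m := by omega
        refine ⟨nxt_mem S _ (hstep _ h1 hφ), ?_⟩
        rw [nxt_diff, h2]
        push_cast
        ring
    have hlast : (nxt S)^[a + b - 1] ((1 : ℤ), m + (b : ℤ)) = (((a : ℕ) : ℤ), m) := by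
      have h1 := hinv (a + b - 1) le_rfl
      refine uniq _ h1.1 _ hbot ?_
      rw [h1.2]
      show 1 - (m + b) + ((a + b - 1 : ℕ) : ℤ) = ((a : ℕ) : ℤ) - m
      omega
    have hSet : S = {x | x ∈ l} := by
      ext s
      simp only [Set.mem_setOf_eq, hmeml]
      constructor
      · intro hsS
        obtain ⟨b1, b2, b3, b4⟩ := hS s hsS
        have b5 := hminS s hsS
        have b6 := span s hsS
        refine ⟨(s.1 - s.2 - (1 - (m + b))).toNat, by omega, ?_⟩
        have h1 := hinv (s.1 - s.2 - (1 - (m + b))).toNat (by omega)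
        refine uniq _ h1.1 _ hsS ?_
        rw [h1.2]
        omega
      · rintro ⟨i, hi, rfl⟩
        exact (hinv i hi).1
    refine ⟨m.toNat, by omega, by omega, l, ⟨hcl, ?_, ?_⟩, hSet⟩
    · rw [hhl]
      have he : ((1 : ℤ), m + (b : ℤ)) = ((1 : ℤ), (b : ℤ) + (m.toNat : ℤ)) := by
        rw [Prod.ext_iff]
        exact ⟨rfl, by omega⟩
      rw [he]
    · rw [hll, hlast]
      have he : (((a : ℕ) : ℤ), m) = (((a : ℕ) : ℤ), (m.toNat : ℤ)) := by
        rw [Prod.ext_iff]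
        exact ⟨rfl, by omega⟩
      rw [he]
  · rintro ⟨h, hh1, hh2, l, ⟨hc, hhead, hlast⟩, rfl⟩
    have hb1 : (1 : ℤ) ≤ (h : ℤ) := by exact_mod_cast hh1
    have hb2 : (h : ℤ) ≤ (b : ℤ) := by exact_mod_cast hh2
    have hbounds : ∀ p ∈ l, 1 ≤ p.1 ∧ p.2 ≤ (b : ℤ) + h ∧ p.1 ≤ (a : ℤ) ∧ (h : ℤ) ≤ p.2 :=
      path_bounds l _ _ ⟨hc, hhead, hlast⟩
    constructor
    · intro p hp q hq hpq
      have hcomp := path_pairwise l hc p hp q hq hpq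
      have bp := hbounds p hp
      have bq := hbounds q hq
      intro hple
      rcases hple with rfl | h' | h'
      · exact hpq rfl
      · rcases hcomp with ⟨u, v, w⟩ | ⟨u, v, w⟩ <;> omega
      · rcases hcomp with ⟨u, v, w⟩ | ⟨u, v, w⟩ <;> omega
    · intro S' hS' hac' hsub
      refine Set.Subset.antisymm hsub ?_
      intro r hr
      by_contra hrl
      obtain ⟨hr1, hr2, hr3, hr4⟩ := hS' r hr
      have hkey : ∃ s ∈ l, ple b s r ∨ ple b r s := by
        by_cases hcase1 : (b : ℤ) + h < r.2
        · refine ⟨(((a : ℕ) : ℤ), (h : ℤ)), List.mem_of_mem_getLast? (by rw [hlast]; rfl), ?_⟩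
          exact Or.inl (Or.inr (Or.inr
            (show (h : ℤ) ≤ (b : ℤ) ∧ (b : ℤ) + 1 ≤ r.2 ∧ (h : ℤ) < r.2 - b from
              ⟨by omega, by omega, by omega⟩)))
        · by_cases hcase2 : r.2 < (h : ℤ)
          · refine ⟨((1 : ℤ), (b : ℤ) + (h : ℤ)), List.mem_of_mem_head? (by rw [hhead]; rfl), ?_⟩
            exact Or.inr (Or.inr (Or.inr
              (show r.2 ≤ (b : ℤ) ∧ (b : ℤ) + 1 ≤ (b : ℤ) + h ∧ r.2 < (b : ℤ) + h - b from
                ⟨by omega, by omega, by omega⟩)))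
          · obtain ⟨s, hsl, hφ⟩ := diag_surj l _ _ ⟨hc, hhead, hlast⟩ (r.1 - r.2)
              (show (1 : ℤ) - ((b : ℤ) + h) ≤ r.1 - r.2 by omega)
              (show r.1 - r.2 ≤ ((a : ℕ) : ℤ) - (h : ℤ) by omega)
            have hsr : s ≠ r := fun e => hrl (e ▸ hsl)
            rcases lt_trichotomy s.1 r.1 with hx | hx | hx
            · exact ⟨s, hsl, Or.inl (Or.inr (Or.inl ⟨hx, by omega⟩))⟩
            · exact absurd (Prod.ext_iff.mpr ⟨hx, by omega⟩) hsr
            · exact ⟨s, hsl, Or.inr (Or.inr (Or.inl ⟨hx, by omega⟩))⟩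
      obtain ⟨s, hsl, hcomp⟩ := hkey
      have hsS' : s ∈ S' := hsub hsl
      have hsr : s ≠ r := fun e => hrl (e ▸ hsl)
      rcases hcomp with h' | h'
      · exact hac' hsS' hr hsr h'
      · exact hac' hr hsS' (Ne.symm hsr) h'
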